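/- Let n ≥ 1 and let f : ℝ → ℝ be n times weakly differentiable. Let a < b be reals. Then there exists an n times weakly differentiable g : ℝ → ℝ such that g(x) = f(x) for x ≤ a, g(x) = 0 for x ≥ b, and for each k = 0,…,n and x ∈ [a,b], |g^{(k)}(x)| ≤ Σ_{i=0}^k binom(k,i) c_{k−i} (b−a)^{−(k−i)} |f^{(i)}(x)|, where the constants c_j depend only on j (not on f, a, b). -/

import Mathlib

open MeasureTheory

/-- Smooth localization: given an `n` times differentiable `f` and `a < b`, there is an
`n` times differentiable `g` equal to `f` on `(-∞,a]`, vanishing on `[b,∞)`, with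
derivative bounds on `[a,b]` involving constants depending only on the order. -/
theorem localizing_function (n : ℕ) (hn : 1 ≤ n) :
    ∃ c : ℕ → ℝ, ∀ (f : ℝ → ℝ) (a b : ℝ), a < b → ContDiff ℝ n f →
      ∃ g : ℝ → ℝ, ContDiff ℝ n g ∧ (∀ x ≤ a, g x = f x) ∧ (∀ x, b ≤ x → g x = 0) ∧
        ∀ k ≤ n, ∀ x ∈ Set.Icc a b,
          |iteratedDeriv k g x| ≤
            ∑ i ∈ Finset.range (k + 1),
              (k.choose i : ℝ) * c (k - i) * (b - a) ^ (-(((k - i : ℕ)) : ℤ)) *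
                |iteratedDeriv i f x| := by
  set ψ : ℝ → ℝ := Real.smoothTransition with hψdef
  have hψ : ∀ m : ℕ, ContDiff ℝ (m : ℕ∞) ψ := fun m => Real.smoothTransition.contDiff
  refine ⟨fun j => sSup ((fun t => |iteratedDeriv j ψ t|) '' Set.Icc (0:ℝ) 1), ?_⟩
  intro f a b hab hf
  have hd : (0:ℝ) < b - a := by linarith
  set d : ℝ := b - a with hddef
  set m : ℝ := -(d⁻¹) with hmdef
  set c₀ : ℝ := b / d with hc0def
  have harg : ∀ x : ℝ, c₀ + m * x = (b - x) / d := by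
    intro x; rw [hc0def, hmdef]; simp only [div_eq_mul_inv]; ring
  set μ : ℝ → ℝ := fun x => ψ (c₀ + m * x) with hμdef
  have hμc : ContDiff ℝ (n : ℕ∞) μ :=
    (hψ n).comp (contDiff_const.add (contDiff_const.mul contDiff_id))
  refine ⟨fun x => f x * μ x, hf.mul hμc, ?_, ?_, ?_⟩
  · intro x hx
    have h1 : (1:ℝ) ≤ c₀ + m * x := by
      rw [harg]
      rw [le_div_iff₀ hd]
      simp only [hddef]; linarith
    simp [hμdef, hψdef, Real.smoothTransition.one_of_one_le h1]
  · intro x hx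
    have h0 : c₀ + m * x ≤ 0 := by
      rw [harg]
      apply div_nonpos_of_nonpos_of_nonneg <;> linarith
    simp [hμdef, hψdef, Real.smoothTransition.zero_of_nonpos h0]
  · intro k hk x hx
    -- iterated derivatives of μ
    have hμd : ∀ j : ℕ, iteratedDeriv j μ x = m ^ j * iteratedDeriv j ψ (c₀ + m * x) := by
      intro j
      have hF : ContDiff ℝ (j : ℕ∞) (fun z => ψ (c₀ + z)) :=
        (hψ j).comp (contDiff_const.add contDiff_id)
      have h1 : iteratedDeriv j (fun x => (fun z => ψ (c₀ + z)) (m * x)) x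
          = m ^ j * iteratedDeriv j (fun z => ψ (c₀ + z)) (m * x) := by
        rw [iteratedDeriv_comp_const_mul hF m]
      have h2 := iteratedDeriv_comp_const_add j ψ c₀
      calc iteratedDeriv j μ x
          = m ^ j * iteratedDeriv j (fun z => ψ (c₀ + z)) (m * x) := h1
        _ = m ^ j * iteratedDeriv j ψ (c₀ + m * x) := by rw [h2]
    -- the argument is in [0,1]
    have hmem : c₀ + m * x ∈ Set.Icc (0:ℝ) 1 := by
      rw [harg]
      constructor
      · apply div_nonneg _ hd.le; linarith [hx.2]
      · rw [div_le_one hd]; simp only [hddef]; linarith [hx.1]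
    -- bound on |iteratedDeriv j ψ| on [0,1]
    have hcb : ∀ j : ℕ, |iteratedDeriv j ψ (c₀ + m * x)| ≤
        sSup ((fun t => |iteratedDeriv j ψ t|) '' Set.Icc (0:ℝ) 1) := by
      intro j
      apply le_csSup
      · exact (isCompact_Icc.image
          (((hψ j).continuous_iteratedDeriv j le_rfl).abs)).bddAbove
      · exact Set.mem_image_of_mem _ hmem
    -- Leibniz
    have hkn : (k : WithTop ℕ∞) ≤ (n : ℕ∞) := by exact_mod_cast hk
    have hmain := norm_iteratedFDeriv_mul_le (𝕜 := ℝ) hf hμc x hkn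
    rw [norm_iteratedFDeriv_eq_norm_iteratedDeriv, Real.norm_eq_abs] at hmain
    refine hmain.trans (Finset.sum_le_sum ?_)
    intro i hi
    rw [norm_iteratedFDeriv_eq_norm_iteratedDeriv, norm_iteratedFDeriv_eq_norm_iteratedDeriv,
      Real.norm_eq_abs, Real.norm_eq_abs, hμd (k - i), abs_mul, abs_pow]
    have hmabs : |m| = d⁻¹ := by
      rw [hmdef, abs_neg, abs_inv, abs_of_pos hd]
    have hzp : |m| ^ (k - i) = d ^ (-((k - i : ℕ) : ℤ)) := by
      rw [hmabs, zpow_neg, zpow_natCast, inv_pow]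
    have hb := hcb (k - i)
    calc (k.choose i : ℝ) * |iteratedDeriv i f x| *
          (|m| ^ (k - i) * |iteratedDeriv (k - i) ψ (c₀ + m * x)|)
        ≤ (k.choose i : ℝ) * |iteratedDeriv i f x| * (|m| ^ (k - i) *
            sSup ((fun t => |iteratedDeriv (k - i) ψ t|) '' Set.Icc (0:ℝ) 1)) := by
          apply mul_le_mul_of_nonneg_left
          · exact mul_le_mul_of_nonneg_left hb (by positivity)
          · positivity
      _ = (k.choose i : ℝ) *
            sSup ((fun t => |iteratedDeriv (k - i) ψ t|) '' Set.Icc (0:ℝ) 1) *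
            d ^ (-((k - i : ℕ) : ℤ)) * |iteratedDeriv i f x| := by
          rw [← hzp]; ring
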